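/- Let R be a discrete valuation domain with prime element p, and let M be a left R-module. If pM is a direct sum of cyclic modules, then M is a direct sum of cyclic modules. -/

import Mathlib

section helpers

variable {R : Type*} [Ring R] {M : Type*} [AddCommGroup M] [Module R M] {ι : Type*}

lemma aux_eq_zero_of_sum_eq_zero [DecidableEq ι] {C : ι → Submodule R M} (hC : iSupIndep C)
    (s : Finset ι) (z : ι → M) (hz : ∀ i, z i ∈ C i) (h0 : ∑ i ∈ s, z i = 0) :
    ∀ i ∈ s, z i = 0 := by
  intro i hi
  have h1 : z i = -∑ j ∈ s.erase i, z j := by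
    have h2 := Finset.add_sum_erase s z hi
    rw [h0] at h2
    exact eq_neg_of_add_eq_zero_left h2
  have h2 : z i ∈ ⨆ j ≠ i, C j := by
    rw [h1]
    refine neg_mem (Submodule.sum_mem _ fun j hj => ?_)
    exact Submodule.mem_iSup_of_mem j
      (Submodule.mem_iSup_of_mem (Finset.ne_of_mem_erase hj) (hz j))
  exact (Submodule.mem_bot R).mp ((hC i).le_bot ⟨hz i, h2⟩)

lemma aux_iSupIndep_of_sum {C : ι → Submodule R M}
    (hC : ∀ (s : Finset ι) (z : ι → M), (∀ i, z i ∈ C i) → ∑ i ∈ s, z i = 0 →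
      ∀ i ∈ s, z i = 0) : iSupIndep C := by
  classical
  apply iSupIndep_of_dfinsupp_lsum_injective
  rw [← LinearMap.ker_eq_bot, LinearMap.ker_eq_bot']
  intro f hf
  have hsum : ∑ i ∈ f.support, ((f i : M)) = 0 := by
    simpa [DFinsupp.lsum_apply_apply, DFinsupp.sumAddHom_apply, DFinsupp.sum] using hf
  have key := hC f.support (fun i => (f i : M)) (fun i => (f i).2) hsum
  ext i
  by_cases hi : i ∈ f.support
  · simpa using key i hi
  · simpa using DFinsupp.notMem_support_iff.mp hi

end helpers

/-- `M` is (an internal) direct sum of cyclic modules. -/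
def IsDirectSumOfCyclics (R : Type) [Ring R] (M : Type u) [AddCommGroup M]
    [Module R M] : Prop :=
  ∃ (ι : Type u) (N : ι → Submodule R M),
    (letI : DecidableEq ι := Classical.decEq ι; DirectSum.IsInternal N) ∧ ∀ i : ι, ∃ m : M, N i = Submodule.span R {m}

/-- Over a discrete valuation domain with prime element `p`: if `pM` is a direct sum of
cyclic modules, then so is `M`. -/
theorem isDirectSumOfCyclics_of_smul_top
    (R : Type) [CommRing R] [IsDomain R] [IsDiscreteValuationRing R]
    (p : R) (hp : Irreducible p)
    (M : Type) [AddCommGroup M] [Module R M]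
    (h : IsDirectSumOfCyclics R (↥(Ideal.span {p} • (⊤ : Submodule R M)))) :
    IsDirectSumOfCyclics R M := by
  classical
  set P : Submodule R M := Ideal.span {p} • (⊤ : Submodule R M) with hPdef
  obtain ⟨ι, N, hN, hcyc⟩ := h
  have hNint : DirectSum.IsInternal N := hN
  have hNind : iSupIndep N := hNint.submodule_iSupIndep
  have hNsup : ⨆ i, N i = ⊤ := hNint.submodule_iSup_eq_top
  choose c' hc' using hcyc
  set c : ι → M := fun i => (c' i : M) with hcdef
  set C : ι → Submodule R M := fun i => (N i).map P.subtype with hCdef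
  have hCsup : ⨆ i, C i = P := by
    rw [hCdef, ← Submodule.map_iSup, hNsup, Submodule.map_top, Submodule.range_subtype]
  have hCspan : ∀ i, C i = Submodule.span R {c i} := by
    intro i
    rw [hCdef]
    simp only [hc' i, Submodule.map_span, Set.image_singleton]
    rfl
  have hCleP : ∀ i, C i ≤ P := fun i => hCsup ▸ le_iSup C i
  have hCkey : ∀ (s : Finset ι) (z : ι → M), (∀ i, z i ∈ C i) → ∑ i ∈ s, z i = 0 →
      ∀ i ∈ s, z i = 0 := by
    intro s z hz h0
    choose y hyN hyz using fun i => Submodule.mem_map.mp (hz i)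
    have hy0 : ∑ i ∈ s, y i = 0 := by
      apply Submodule.injective_subtype P
      rw [map_sum, map_zero]
      simpa [hyz] using h0
    intro i hi
    rw [← hyz i, aux_eq_zero_of_sum_eq_zero hNind s y hyN hy0 i hi, map_zero]
  -- choose lifts a i with p • a i = c i
  have hex : ∀ i, ∃ m : M, p • m = c i ∧ (c i = 0 → m = 0) := by
    intro i
    by_cases h0 : c i = 0
    · exact ⟨0, by simp [h0], fun _ => rfl⟩
    · have hcP : c i ∈ P := (c' i).2
      rw [hPdef, Submodule.ideal_span_singleton_smul, ← SetLike.mem_coe,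
        Submodule.coe_pointwise_smul] at hcP
      obtain ⟨m, -, hm⟩ := hcP
      exact ⟨m, hm, fun hc => absurd hc h0⟩
  choose a ha ha0 using hex
  -- torsion submodule T
  set T : Submodule R M := Submodule.torsionBy R M p with hTdef
  have hmemT : ∀ x : M, x ∈ T ↔ p • x = 0 := fun x => Submodule.mem_torsionBy_iff p x
  haveI hmax : (Ideal.span {p} : Ideal R).IsMaximal :=
    PrincipalIdealRing.isMaximal_of_irreducible hp
  letI : Field (R ⧸ Ideal.span {p}) := Ideal.Quotient.field _
  have htor : Module.IsTorsionBySet R (↥T) (Ideal.span {p}) := by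
    have : Module.IsTorsionBy R (↥T) p := fun x => Submodule.smul_torsionBy p x
    exact (Module.isTorsionBySet_span_singleton_iff p).mpr this
  letI : Module (R ⧸ Ideal.span {p}) (↥T) := htor.module
  let l : (↥T) →ₛₗ[Ideal.Quotient.mk (Ideal.span {p})] (↥T) :=
    { toFun := id, map_add' := fun _ _ => rfl,
      map_smul' := fun r x => (htor.mk_smul r x).symm }
  haveI hTss : IsSemisimpleModule R (↥T) :=
    (l.isSemisimpleModule_iff_of_bijective Function.bijective_id).mpr inferInstance
  -- complement S of P ⊓ T inside T
  obtain ⟨S', hScompl⟩ := exists_isCompl (Submodule.comap T.subtype P)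
  set S : Submodule R M := S'.map T.subtype with hSdef
  have hSleT : S ≤ T := Submodule.map_subtype_le T S'
  have hS_disj : ∀ x : M, x ∈ P → x ∈ S → x = 0 := by
    intro x hxP hxS
    obtain ⟨t', ht'S, ht'⟩ := Submodule.mem_map.mp hxS
    have ht'P : t' ∈ Submodule.comap T.subtype P := by
      simpa [ht'] using hxP
    have : t' = 0 := by
      have := hScompl.disjoint.le_bot ⟨ht'P, ht'S⟩
      simpa using this
    rw [← ht', this]
    exact map_zero _
  have hS_sup : ∀ x : M, x ∈ T → ∃ y z : M, (y ∈ P ∧ y ∈ T) ∧ z ∈ S ∧ x = y + z := by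
    intro x hx
    have ht : (⟨x, hx⟩ : ↥T) ∈ Submodule.comap T.subtype P ⊔ S' := by
      rw [hScompl.sup_eq_top]; trivial
    obtain ⟨u, hu, v, hv, huv⟩ := Submodule.mem_sup.mp ht
    refine ⟨(u : M), (v : M), ⟨hu, u.2⟩, Submodule.mem_map.mpr ⟨v, hv, rfl⟩, ?_⟩
    have := congrArg (fun t : ↥T => (t : M)) huv
    simpa using this.symm
  haveI hSss : IsSemisimpleModule R (↥S) :=
    IsSemisimpleModule.congr
      (Submodule.equivMapOfInjective T.subtype (Submodule.injective_subtype T) S').symm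
  obtain ⟨sW, hsWind, hsWsup, hsWsimple⟩ :=
    IsSemisimpleModule.exists_sSupIndep_sSup_simples_eq_top R (↥S)
  have hsWind' : iSupIndep (fun W : sW => (W : Submodule R ↥S)) :=
    (sSupIndep_iff sW).mp hsWind
  -- generators of the simple pieces
  have hWspan : ∀ W : sW, ∃ x : ↥S, (W : Submodule R ↥S) = Submodule.span R {x} := by
    intro W
    have hatom : IsAtom (W : Submodule R ↥S) :=
      isSimpleModule_iff_isAtom.mp (hsWsimple W W.2)
    obtain ⟨x, hxW, hx0⟩ := Submodule.ne_bot_iff _ |>.mp hatom.1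
    refine ⟨x, ?_⟩
    have hle : Submodule.span R {x} ≤ (W : Submodule R ↥S) :=
      (Submodule.span_singleton_le_iff_mem x _).mpr hxW
    rcases hle.lt_or_eq with hlt | heq
    · exact absurd (hatom.2 _ hlt) (by simpa [Submodule.span_singleton_eq_bot] using hx0)
    · exact heq.symm
  -- final family
  refine ⟨ι ⊕ ↥sW,
    Sum.elim (fun i => Submodule.span R {a i}) (fun W => (W : Submodule R ↥S).map S.subtype),
    ?_, ?_⟩
  swap
  · rintro (i | W)
    · exact ⟨a i, rfl⟩
    · obtain ⟨x, hx⟩ := hWspan W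
      exact ⟨(x : M), by rw [Sum.elim_inr, hx, Submodule.map_span, Set.image_singleton]; rfl⟩
  set F : ι ⊕ ↥sW → Submodule R M :=
    Sum.elim (fun i => Submodule.span R {a i}) (fun W => (W : Submodule R ↥S).map S.subtype)
    with hFdef
  letI : DecidableEq (ι ⊕ ↥sW) := Classical.decEq _
  apply DirectSum.isInternal_submodule_of_iSupIndep_of_iSup_eq_top
  -- independence
  · apply aux_iSupIndep_of_sum
    intro s z hz h0
    choose r hr using fun i => Submodule.mem_span_singleton.mp (hz (Sum.inl i))
    have hzT : ∀ W : ↥sW, z (Sum.inr W) ∈ T := fun W =>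
      hSleT (Submodule.map_subtype_le S _ (hz (Sum.inr W)))
    have hsplit : ∑ i ∈ s.toLeft, z (Sum.inl i) + ∑ W ∈ s.toRight, z (Sum.inr W) = 0 := by
      have heq : ∑ kk ∈ s, z kk
          = ∑ i ∈ s.toLeft, z (Sum.inl i) + ∑ W ∈ s.toRight, z (Sum.inr W) := by
        nth_rewrite 1 [← Finset.toLeft_disjSum_toRight (u := s)]
        rw [← Finset.map_inl_disjUnion_map_inr, Finset.sum_disjUnion, Finset.sum_map,
          Finset.sum_map]
        rfl
      rw [← heq, h0]
    -- multiply by p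
    have hpsum : ∑ i ∈ s.toLeft, (r i • c i) = 0 := by
      have := congrArg (fun m : M => p • m) hsplit
      simp only [smul_add, smul_zero, Finset.smul_sum] at this
      have h2 : ∀ W ∈ s.toRight, p • z (Sum.inr W) = 0 := fun W _ =>
        (hmemT _).mp (hzT W)
      rw [Finset.sum_congr rfl h2, Finset.sum_const_zero, add_zero] at this
      calc ∑ i ∈ s.toLeft, r i • c i
          = ∑ i ∈ s.toLeft, p • z (Sum.inl i) := by
            refine Finset.sum_congr rfl fun i _ => ?_
            rw [← hr i, ← ha i, smul_comm]
        _ = 0 := this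
    have hrc0 : ∀ i ∈ s.toLeft, r i • c i = 0 :=
      hCkey s.toLeft (fun i => r i • c i)
        (fun i => (hCspan i).symm ▸ Submodule.smul_mem _ _ (Submodule.mem_span_singleton_self _))
        hpsum
    -- each left term lies in C i and in T
    have hmem : ∀ i ∈ s.toLeft, z (Sum.inl i) ∈ C i ∧ z (Sum.inl i) ∈ T := by
      intro i hi
      by_cases hai : a i = 0
      · rw [← hr i, hai, smul_zero]
        exact ⟨zero_mem _, zero_mem _⟩
      · have hci : c i ≠ 0 := fun hc => hai (ha0 i hc)
        have hnu : ¬IsUnit (r i) := by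
          intro hu
          exact hci (by simpa using (hu.smul_eq_zero).mp (hrc0 i hi))
        have hdvd : p ∣ r i := by
          have : r i ∈ IsLocalRing.maximalIdeal R := hnu
          rw [hp.maximalIdeal_eq, Ideal.mem_span_singleton] at this
          exact this
        obtain ⟨q, hq⟩ := hdvd
        constructor
        · rw [← hr i, hq, mul_comm, mul_smul, ha i, hCspan i]
          exact Submodule.smul_mem _ _ (Submodule.mem_span_singleton_self _)
        · rw [hmemT, ← hr i, smul_comm, ha i, hrc0 i hi]
    -- the sum of left terms is in (P ⊓ T) ∩ S = 0
    have hXP : ∑ i ∈ s.toLeft, z (Sum.inl i) ∈ P :=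
      Submodule.sum_mem _ fun i hi => hCleP i (hmem i hi).1
    have hXS : ∑ i ∈ s.toLeft, z (Sum.inl i) ∈ S := by
      have : ∑ i ∈ s.toLeft, z (Sum.inl i) = -∑ W ∈ s.toRight, z (Sum.inr W) :=
        eq_neg_of_add_eq_zero_left hsplit
      rw [this]
      exact neg_mem (Submodule.sum_mem _ fun W _ =>
        Submodule.map_subtype_le S _ (hz (Sum.inr W)))
    have hX0 : ∑ i ∈ s.toLeft, z (Sum.inl i) = 0 := hS_disj _ hXP hXS
    have hleft : ∀ i ∈ s.toLeft, z (Sum.inl i) = 0 := by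
      intro i hi
      have key := hCkey s.toLeft
        (fun j => if j ∈ s.toLeft then z (Sum.inl j) else 0)
        (fun j => by
          by_cases hj : j ∈ s.toLeft
          · simpa [hj] using (hmem j hj).1
          · simp [hj])
        (by
          rw [Finset.sum_congr rfl fun j hj => if_pos hj]
          exact hX0)
      simpa [hi] using key i hi
    have hright : ∀ W ∈ s.toRight, z (Sum.inr W) = 0 := by
      have hXr : ∑ W ∈ s.toRight, z (Sum.inr W) = 0 := by
        rw [hX0, zero_add] at hsplit
        exact hsplit
      choose y hyW hyz using fun W : ↥sW => Submodule.mem_map.mp (hz (Sum.inr W))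
      have hy0 : ∑ W ∈ s.toRight, y W = 0 := by
        apply Submodule.injective_subtype S
        rw [map_sum, map_zero]
        simpa [hyz] using hXr
      intro W hW
      rw [← hyz W, aux_eq_zero_of_sum_eq_zero hsWind' s.toRight y hyW hy0 W hW, map_zero]
    rintro (i | W) hk
    · exact hleft i (Finset.mem_toLeft.mpr hk)
    · exact hright W (Finset.mem_toRight.mpr hk)
  -- spanning
  · rw [eq_top_iff]
    rintro x -
    set A : Submodule R M := ⨆ i, Submodule.span R {a i} with hAdef
    have hAle : A ≤ ⨆ kk, F kk :=
      iSup_le fun i => le_iSup F (Sum.inl i)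
    have hPleA : P ≤ A := by
      rw [← hCsup]
      refine iSup_le fun i => ?_
      rw [hCspan i]
      refine (Submodule.span_singleton_le_iff_mem _ _).mpr ?_
      have : c i ∈ Submodule.span R {a i} := by
        rw [← ha i]
        exact Submodule.smul_mem _ _ (Submodule.mem_span_singleton_self _)
      exact le_iSup (fun i => Submodule.span R {a i}) i this
    have hSle' : S ≤ ⨆ kk, F kk := by
      have h1 : S = ⨆ W : ↥sW, Submodule.map S.subtype (W : Submodule R ↥S) := by
        calc S = Submodule.map S.subtype ⊤ := (Submodule.map_subtype_top S).symm
          _ = Submodule.map S.subtype (sSup sW) := by rw [hsWsup]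
          _ = Submodule.map S.subtype (⨆ W : ↥sW, (W : Submodule R ↥S)) := by
              rw [sSup_eq_iSup']
          _ = ⨆ W : ↥sW, Submodule.map S.subtype (W : Submodule R ↥S) :=
              Submodule.map_iSup _ _
      refine le_trans (le_of_eq h1) ?_
      exact iSup_le fun W => le_iSup F (Sum.inr W)
    -- find z in A with p • z = p • x
    have hPA : ∀ y ∈ P, ∃ w ∈ A, p • w = y := by
      intro y hy
      rw [← hCsup] at hy
      refine Submodule.iSup_induction (motive := fun y => ∃ w ∈ A, p • w = y) _ hy ?_
        ⟨0, zero_mem _, smul_zero p⟩ ?_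
      · intro i u hu
        rw [hCspan i, Submodule.mem_span_singleton] at hu
        obtain ⟨r, rfl⟩ := hu
        refine ⟨r • a i, ?_, ?_⟩
        · exact le_iSup (fun i => Submodule.span R {a i}) i
            (Submodule.smul_mem _ _ (Submodule.mem_span_singleton_self _))
        · rw [smul_comm, ha i]
      · rintro u v ⟨w₁, hw₁, rfl⟩ ⟨w₂, hw₂, rfl⟩
        exact ⟨w₁ + w₂, add_mem hw₁ hw₂, smul_add p w₁ w₂⟩
    have hpx : p • x ∈ P := by
      rw [hPdef]
      exact Submodule.smul_mem_smul (Submodule.mem_span_singleton_self p) trivial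
    obtain ⟨w, hwA, hw⟩ := hPA (p • x) hpx
    have hxwT : x - w ∈ T := by
      rw [hmemT, smul_sub, hw, sub_self]
    obtain ⟨y₁, y₂, ⟨hy₁P, _⟩, hy₂S, hxy⟩ := hS_sup (x - w) hxwT
    have hx2 : x = w + y₁ + y₂ := by
      have h2 := eq_add_of_sub_eq hxy
      rw [h2]
      abel
    rw [hx2]
    exact add_mem (add_mem (hAle hwA) (hAle (hPleA hy₁P))) (hSle' hy₂S)
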